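/- Let Γ = (γ_{ij}) be an (m+1)×m matrix with entries in [0,1] that is monotone and satisfies γ_{0j} < γ_{mj} for every j = 1, …, m. Let s and ŝ be integers with 1 ≤ s < ŝ. Let u^{(0)} = û^{(0)} be a vector all of whose components lie in the open interval (0,1), and define the sequences u^{(t)} and û^{(t)} by u^{(t+1)}_j = γ_{mj} − Σ_{i=1}^m (γ_{ij} − γ_{i−1,j})(1 − u^{(t)}_i)^s and û^{(t+1)}_j = γ_{mj} − Σ_{i=1}^m (γ_{ij} − γ_{i−1,j})(1 − û^{(t)}_i)^{ŝ} for j = 1, …, m and t ≥ 0. Then for every t ≥ 1 and every j = 1, …, m, one has 0 < u^{(t)}_j < û^{(t)}_j < 1. -/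

import Mathlib

private lemma telescope_aux (f : ℕ → ℝ) :
    ∀ n, ∑ i ∈ Finset.Icc 1 n, (f i - f (i - 1)) = f n - f 0 := by
  intro n
  induction n with
  | zero => simp
  | succ n ih =>
    rw [Finset.sum_Icc_succ_top (by omega), ih]
    simp only [Nat.add_sub_cancel]
    ring

/-- deterministic core of Theorem 4 of the paper: for a monotone
`(m+1) × m` matrix `γ` with entries in `[0,1]` and `γ 0 j < γ m j` for all `j`, tournament
sizes `1 ≤ s < s'`, and the recursions
`u (t+1) j = γ m j - ∑_{i=1}^m (γ i j - γ (i-1) j)(1 - u t i)^s` (resp. with `s'` and `v`)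
started from a common vector with components in `(0,1)`, one has
`0 < u t j < v t j < 1` for every `t ≥ 1` and `j = 1, …, m`. -/
theorem stmt_8 (m : ℕ) (hm : 1 ≤ m) (γ : ℕ → ℕ → ℝ)
    (hrange : ∀ i j, i ≤ m → 1 ≤ j → j ≤ m → γ i j ∈ Set.Icc (0 : ℝ) 1)
    (hmono : ∀ i j, 1 ≤ i → i ≤ m → 1 ≤ j → j ≤ m → γ (i - 1) j ≤ γ i j)
    (hgap : ∀ j, 1 ≤ j → j ≤ m → γ 0 j < γ m j)
    (s s' : ℕ) (hs : 1 ≤ s) (hss : s < s')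
    (u v : ℕ → ℕ → ℝ)
    (h0 : ∀ j, 1 ≤ j → j ≤ m → u 0 j = v 0 j ∧ u 0 j ∈ Set.Ioo (0 : ℝ) 1)
    (hu : ∀ t, ∀ j, 1 ≤ j → j ≤ m →
      u (t + 1) j = γ m j - ∑ i ∈ Finset.Icc 1 m, (γ i j - γ (i - 1) j) * (1 - u t i) ^ s)
    (hv : ∀ t, ∀ j, 1 ≤ j → j ≤ m →
      v (t + 1) j = γ m j - ∑ i ∈ Finset.Icc 1 m, (γ i j - γ (i - 1) j) * (1 - v t i) ^ s') :
    ∀ t, 1 ≤ t → ∀ j, 1 ≤ j → j ≤ m →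
      0 < u t j ∧ u t j < v t j ∧ v t j < 1 := by
  -- weights are nonneg and sum to γ m j - γ 0 j > 0
  have hw : ∀ j, 1 ≤ j → j ≤ m → ∀ i ∈ Finset.Icc 1 m, (0:ℝ) ≤ γ i j - γ (i - 1) j := by
    intro j hj1 hjm i hi
    rw [Finset.mem_Icc] at hi
    have := hmono i j hi.1 hi.2 hj1 hjm
    linarith
  have hsum : ∀ j, ∑ i ∈ Finset.Icc 1 m, (γ i j - γ (i - 1) j) = γ m j - γ 0 j := by
    intro j; exact telescope_aux (fun i => γ i j) m
  have hSpos : ∀ j, 1 ≤ j → j ≤ m → (0:ℝ) < γ m j - γ 0 j := by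
    intro j hj1 hjm; have := hgap j hj1 hjm; linarith
  have hex : ∀ j, 1 ≤ j → j ≤ m → ∃ i ∈ Finset.Icc 1 m, (0:ℝ) < γ i j - γ (i - 1) j := by
    intro j hj1 hjm
    by_contra h
    push_neg at h
    have : ∑ i ∈ Finset.Icc 1 m, (γ i j - γ (i - 1) j) ≤ 0 :=
      Finset.sum_nonpos h
    rw [hsum j] at this
    exact absurd this (not_le.mpr (hSpos j hj1 hjm))
  -- range bound for the update map
  have hbound : ∀ (x : ℕ → ℝ) (k : ℕ), 1 ≤ k →
      (∀ i, 1 ≤ i → i ≤ m → x i ∈ Set.Ioo (0:ℝ) 1) →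
      ∀ j, 1 ≤ j → j ≤ m →
        (γ m j - ∑ i ∈ Finset.Icc 1 m, (γ i j - γ (i - 1) j) * (1 - x i) ^ k)
          ∈ Set.Ioo (0:ℝ) 1 := by
    intro x k hk hx j hj1 hjm
    obtain ⟨i0, hi0, hi0pos⟩ := hex j hj1 hjm
    have hxi : ∀ i ∈ Finset.Icc 1 m, (0:ℝ) < (1 - x i) ^ k ∧ (1 - x i) ^ k < 1 := by
      intro i hi
      rw [Finset.mem_Icc] at hi
      obtain ⟨h1, h2⟩ := hx i hi.1 hi.2
      constructor
      · exact pow_pos (by linarith) k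
      · exact pow_lt_one₀ (by linarith) (by linarith) (by omega)
    have hpos : (0:ℝ) < ∑ i ∈ Finset.Icc 1 m, (γ i j - γ (i - 1) j) * (1 - x i) ^ k := by
      apply Finset.sum_pos'
      · intro i hi
        exact mul_nonneg (hw j hj1 hjm i hi) (le_of_lt (hxi i hi).1)
      · exact ⟨i0, hi0, mul_pos hi0pos (hxi i0 hi0).1⟩
    have hlt : ∑ i ∈ Finset.Icc 1 m, (γ i j - γ (i - 1) j) * (1 - x i) ^ k
        < ∑ i ∈ Finset.Icc 1 m, (γ i j - γ (i - 1) j) := by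
      apply Finset.sum_lt_sum
      · intro i hi
        exact mul_le_of_le_one_right (hw j hj1 hjm i hi) (le_of_lt (hxi i hi).2)
      · refine ⟨i0, hi0, ?_⟩
        calc (γ i0 j - γ (i0 - 1) j) * (1 - x i0) ^ k
            < (γ i0 j - γ (i0 - 1) j) * 1 :=
              mul_lt_mul_of_pos_left (hxi i0 hi0).2 hi0pos
          _ = γ i0 j - γ (i0 - 1) j := mul_one _
    rw [hsum j] at hlt
    have h0r := hrange 0 j (by omega) hj1 hjm
    have hmr := hrange m j le_rfl hj1 hjm
    obtain ⟨h0a, h0b⟩ := h0r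
    obtain ⟨hma, hmb⟩ := hmr
    constructor
    · linarith
    · linarith
  -- strict comparison of the two sums
  have hcomp : ∀ (x y : ℕ → ℝ),
      (∀ i, 1 ≤ i → i ≤ m → y i ∈ Set.Ioo (0:ℝ) 1) →
      (∀ i, 1 ≤ i → i ≤ m → x i ≤ y i) →
      ∀ j, 1 ≤ j → j ≤ m →
        ∑ i ∈ Finset.Icc 1 m, (γ i j - γ (i - 1) j) * (1 - y i) ^ s'
          < ∑ i ∈ Finset.Icc 1 m, (γ i j - γ (i - 1) j) * (1 - x i) ^ s := by
    intro x y hy hxy j hj1 hjm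
    obtain ⟨i0, hi0, hi0pos⟩ := hex j hj1 hjm
    have key : ∀ i ∈ Finset.Icc 1 m, (1 - y i) ^ s' ≤ (1 - x i) ^ s ∧
        ((1 - y i) ^ s' < (1 - y i) ^ s) := by
      intro i hi
      rw [Finset.mem_Icc] at hi
      obtain ⟨hy1, hy2⟩ := hy i hi.1 hi.2
      have hxyi := hxy i hi.1 hi.2
      have h1 : (1 - y i) ^ s' < (1 - y i) ^ s :=
        pow_lt_pow_right_of_lt_one₀ (by linarith) (by linarith) hss
      have h2 : (1 - y i) ^ s ≤ (1 - x i) ^ s :=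
        pow_le_pow_left₀ (by linarith) (by linarith) s
      exact ⟨le_trans (le_of_lt h1) h2, h1⟩
    apply Finset.sum_lt_sum
    · intro i hi
      exact mul_le_mul_of_nonneg_left (key i hi).1 (hw j hj1 hjm i hi)
    · refine ⟨i0, hi0, ?_⟩
      have h2 : (1 - y i0) ^ s ≤ (1 - x i0) ^ s := by
        rw [Finset.mem_Icc] at hi0
        obtain ⟨hy1, hy2⟩ := hy i0 hi0.1 hi0.2
        exact pow_le_pow_left₀ (by linarith) (by linarith [hxy i0 hi0.1 hi0.2]) s
      calc (γ i0 j - γ (i0 - 1) j) * (1 - y i0) ^ s'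
          < (γ i0 j - γ (i0 - 1) j) * (1 - y i0) ^ s :=
            mul_lt_mul_of_pos_left (key i0 hi0).2 hi0pos
        _ ≤ (γ i0 j - γ (i0 - 1) j) * (1 - x i0) ^ s :=
            mul_le_mul_of_nonneg_left h2 (le_of_lt hi0pos)
  -- invariant
  have inv : ∀ t, ∀ j, 1 ≤ j → j ≤ m →
      u t j ∈ Set.Ioo (0:ℝ) 1 ∧ v t j ∈ Set.Ioo (0:ℝ) 1 ∧ u t j ≤ v t j := by
    intro t
    induction t with
    | zero =>
      intro j hj1 hjm
      obtain ⟨heq, hmem⟩ := h0 j hj1 hjm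
      exact ⟨hmem, heq ▸ hmem, le_of_eq heq⟩
    | succ t ih =>
      intro j hj1 hjm
      have hu' := hu t j hj1 hjm
      have hv' := hv t j hj1 hjm
      have hux : ∀ i, 1 ≤ i → i ≤ m → u t i ∈ Set.Ioo (0:ℝ) 1 :=
        fun i h1 h2 => (ih i h1 h2).1
      have hvx : ∀ i, 1 ≤ i → i ≤ m → v t i ∈ Set.Ioo (0:ℝ) 1 :=
        fun i h1 h2 => (ih i h1 h2).2.1
      have huv : ∀ i, 1 ≤ i → i ≤ m → u t i ≤ v t i :=
        fun i h1 h2 => (ih i h1 h2).2.2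
      have hb1 := hbound (u t) s hs hux j hj1 hjm
      have hb2 := hbound (v t) s' (by omega) hvx j hj1 hjm
      have hc := hcomp (u t) (v t) hvx huv j hj1 hjm
      rw [← hu'] at hb1
      rw [← hv'] at hb2
      exact ⟨hb1, hb2, by rw [hu', hv']; linarith⟩
  -- conclusion
  intro t ht j hj1 hjm
  obtain ⟨t', rfl⟩ : ∃ t', t = t' + 1 := ⟨t - 1, by omega⟩
  have hu' := hu t' j hj1 hjm
  have hv' := hv t' j hj1 hjm
  have hux : ∀ i, 1 ≤ i → i ≤ m → u t' i ∈ Set.Ioo (0:ℝ) 1 :=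
    fun i h1 h2 => (inv t' i h1 h2).1
  have hvx : ∀ i, 1 ≤ i → i ≤ m → v t' i ∈ Set.Ioo (0:ℝ) 1 :=
    fun i h1 h2 => (inv t' i h1 h2).2.1
  have huv : ∀ i, 1 ≤ i → i ≤ m → u t' i ≤ v t' i :=
    fun i h1 h2 => (inv t' i h1 h2).2.2
  have hb1 := hbound (u t') s hs hux j hj1 hjm
  have hb2 := hbound (v t') s' (by omega) hvx j hj1 hjm
  have hc := hcomp (u t') (v t') hvx huv j hj1 hjm
  rw [← hu'] at hb1
  rw [← hv'] at hb2
  exact ⟨hb1.1, by rw [hu', hv']; linarith, hb2.2⟩
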